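/- Let λ ∈ ℝ with λ ≠ 0. For every E ∈ ℝ one has sqrt((E² − 4)² + (λE)²) + sqrt(E⁴ + (λE)²) ≥ 4, with equality if and only if E = 0. Equivalently, the Lyapunov exponent L(E) of the mosaic Maryland cocycle vanishes if and only if E = 0. -/

import Mathlib

open Real

lemma key_lt (lam E : ℝ) (hlam : lam ≠ 0) (hE : E ≠ 0) :
    4 < Real.sqrt ((E ^ 2 - 4) ^ 2 + (lam * E) ^ 2) +
        Real.sqrt (E ^ 4 + (lam * E) ^ 2) := by
  have hpos : 0 < (lam * E) ^ 2 := by positivity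
  have h1 : |E ^ 2 - 4| ≤ Real.sqrt ((E ^ 2 - 4) ^ 2 + (lam * E) ^ 2) := by
    rw [← Real.sqrt_sq_eq_abs]
    exact Real.sqrt_le_sqrt (by linarith)
  have h2 : E ^ 2 < Real.sqrt (E ^ 4 + (lam * E) ^ 2) := by
    have : E ^ 2 = Real.sqrt (E ^ 4) := by
      rw [show E ^ 4 = (E ^ 2) ^ 2 by ring, Real.sqrt_sq (by positivity)]
    rw [this]
    exact Real.sqrt_lt_sqrt (by positivity) (by linarith)
  have h3 : 4 - E ^ 2 ≤ |E ^ 2 - 4| := by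
    cases abs_cases (E ^ 2 - 4) with
    | inl h => linarith [h.1]
    | inr h => linarith [h.1]
  linarith

lemma key_eq (lam : ℝ) :
    Real.sqrt (((0:ℝ) ^ 2 - 4) ^ 2 + (lam * 0) ^ 2) +
        Real.sqrt ((0:ℝ) ^ 4 + (lam * 0) ^ 2) = 4 := by
  norm_num

/-- for `λ ≠ 0`, `√((E²-4)² + (λE)²) + √(E⁴ + (λE)²) ≥ 4` with equality
iff `E = 0`; equivalently, the Lyapunov exponent `L(E)` (defined by `L ≥ 0` and
`4 cosh(2L) = √((E²-4)² + (λE)²) + √(E⁴ + (λE)²)`) vanishes iff `E = 0`. -/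
theorem stmt1 (lam : ℝ) (hlam : lam ≠ 0) :
    (∀ E : ℝ, 4 ≤ Real.sqrt ((E ^ 2 - 4) ^ 2 + (lam * E) ^ 2) +
        Real.sqrt (E ^ 4 + (lam * E) ^ 2)) ∧
    (∀ E : ℝ, (Real.sqrt ((E ^ 2 - 4) ^ 2 + (lam * E) ^ 2) +
        Real.sqrt (E ^ 4 + (lam * E) ^ 2) = 4) ↔ E = 0) ∧
    (∀ E L : ℝ, 0 ≤ L →
      4 * Real.cosh (2 * L) =
        Real.sqrt ((E ^ 2 - 4) ^ 2 + (lam * E) ^ 2) +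
          Real.sqrt (E ^ 4 + (lam * E) ^ 2) →
      (L = 0 ↔ E = 0)) := by
  have hge : ∀ E : ℝ, 4 ≤ Real.sqrt ((E ^ 2 - 4) ^ 2 + (lam * E) ^ 2) +
      Real.sqrt (E ^ 4 + (lam * E) ^ 2) := by
    intro E
    rcases eq_or_ne E 0 with h | h
    · subst h; exact (key_eq lam).ge
    · exact (key_lt lam E hlam h).le
  have hiff : ∀ E : ℝ, (Real.sqrt ((E ^ 2 - 4) ^ 2 + (lam * E) ^ 2) +
      Real.sqrt (E ^ 4 + (lam * E) ^ 2) = 4) ↔ E = 0 := by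
    intro E
    constructor
    · intro h
      by_contra hE
      exact absurd h (ne_of_gt (key_lt lam E hlam hE))
    · rintro rfl; exact key_eq lam
  refine ⟨hge, hiff, ?_⟩
  intro E L hL heq
  have hcosh1 : 1 ≤ Real.cosh (2 * L) := Real.one_le_cosh (2 * L)
  constructor
  · rintro rfl
    rw [(hiff E).symm, ← heq]
    norm_num [Real.cosh_zero]
  · rintro rfl
    rw [key_eq lam] at heq
    have : Real.cosh (2 * L) = 1 := by linarith
    have h2L : 2 * L = 0 := by
      by_contra h
      have := Real.one_lt_cosh.mpr h
      linarith
    linarith
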